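/- Let a, e, 𝛚 ∈ ℝ³ with |a| = |e| = 1, ⟨a,e⟩ = 0 and ⟨𝛚,a⟩ = 0. Set h = ½|𝛚|² − ⟨𝛚,e⟩, v = (𝛚 − e) × a and j = e × a. Then |v|² = 2h + 1 and ⟨v, j⟩ = ⟨𝛚,e⟩ − 1 = ½|𝛚|² − h − 1. Consequently, when 2h+1 > 0, the angle α between the initial velocity v and the equator direction j satisfies cos α = (|𝛚|²/2 − h − 1)/√(2h+1). -/
import Mathlib


noncomputable section

open scoped RealInnerProductSpace

/-- `ℝ³` with the Euclidean inner product. -/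
abbrev E3 := EuclideanSpace ℝ (Fin 3)

/-- The cross product on `ℝ³`. -/
def cross3 (u v : E3) : E3 :=
  (WithLp.equiv 2 (Fin 3 → ℝ)).symm
    (crossProduct ((WithLp.equiv 2 (Fin 3 → ℝ)) u) ((WithLp.equiv 2 (Fin 3 → ℝ)) v))

/-- The cross product coordinatewise. -/
lemma cross3_apply (u v : E3) (i : Fin 3) :
    cross3 u v i = ![u 1 * v 2 - u 2 * v 1, u 2 * v 0 - u 0 * v 2, u 0 * v 1 - u 1 * v 0] i := by
  fin_cases i <;> simp [cross3, crossProduct]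

/-- The Binet–Cauchy/Lagrange identity for inner products of cross products. -/
lemma cross3_inner (u v x y : E3) :
    ⟪cross3 u v, cross3 x y⟫ = ⟪u, x⟫ * ⟪v, y⟫ - ⟪u, y⟫ * ⟪v, x⟫ := by
  simp only [PiLp.inner_apply, RCLike.inner_apply, conj_trivial, Fin.sum_univ_three,
    cross3_apply]
  simp only [Matrix.cons_val_zero, Matrix.cons_val_one, Matrix.head_cons, Matrix.cons_val_two,
    Matrix.tail_cons]
  ring

open InnerProductGeometry in
/-- With `h = ½‖𝛚‖² − ⟨𝛚,e⟩`, `v = (𝛚 − e) × a` and `j = e × a`, one has `‖v‖² = 2h + 1` and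
`⟨v,j⟩ = ⟨𝛚,e⟩ − 1 = ½‖𝛚‖² − h − 1`; consequently, when `2h + 1 > 0`, the angle `α` between
the initial velocity `v` and the equator direction `j` satisfies
`cos α = (‖𝛚‖²/2 − h − 1)/√(2h+1)`. -/
theorem inclination_cosine (a e ω : E3) (ha : ‖a‖ = 1) (he : ‖e‖ = 1)
    (hae : ⟪a, e⟫ = 0) (hωa : ⟪ω, a⟫ = 0) :
    let h : ℝ := (1 / 2) * ‖ω‖ ^ 2 - ⟪ω, e⟫
    let v : E3 := cross3 (ω - e) a
    let j : E3 := cross3 e a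
    ‖v‖ ^ 2 = 2 * h + 1 ∧ ⟪v, j⟫ = ⟪ω, e⟫ - 1 ∧ ⟪v, j⟫ = ‖ω‖ ^ 2 / 2 - h - 1 ∧
      (0 < 2 * h + 1 →
        Real.cos (angle v j) = (‖ω‖ ^ 2 / 2 - h - 1) / Real.sqrt (2 * h + 1)) := by
  intro h v j
  have haa : ⟪a, a⟫ = (1 : ℝ) := by
    rw [real_inner_self_eq_norm_sq, ha]; norm_num
  have hee : ⟪e, e⟫ = (1 : ℝ) := by
    rw [real_inner_self_eq_norm_sq, he]; norm_num
  have hωω : ⟪ω, ω⟫ = ‖ω‖ ^ 2 := real_inner_self_eq_norm_sq ω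
  have hea : ⟪e, a⟫ = 0 := by rw [real_inner_comm]; exact hae
  have hsub_a : ⟪ω - e, a⟫ = 0 := by rw [inner_sub_left, hωa, hea]; ring
  have hsub_e : ⟪ω - e, e⟫ = ⟪ω, e⟫ - 1 := by rw [inner_sub_left, hee]
  have hsub_sub : ⟪ω - e, ω - e⟫ = ‖ω‖ ^ 2 - 2 * ⟪ω, e⟫ + 1 := by
    rw [inner_sub_left, inner_sub_right, inner_sub_right, hωω, hee,
      real_inner_comm e ω]
    ring
  have hv2 : ‖v‖ ^ 2 = 2 * h + 1 := by
    rw [← real_inner_self_eq_norm_sq]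
    show ⟪cross3 (ω - e) a, cross3 (ω - e) a⟫ = _
    rw [cross3_inner, hsub_sub, hsub_a, haa]
    simp only [h]; ring
  have hvj : ⟪v, j⟫ = ⟪ω, e⟫ - 1 := by
    show ⟪cross3 (ω - e) a, cross3 e a⟫ = _
    rw [cross3_inner, hsub_e, hsub_a, haa, hae]
    ring
  have hvj' : ⟪v, j⟫ = ‖ω‖ ^ 2 / 2 - h - 1 := by rw [hvj]; simp only [h]; ring
  refine ⟨hv2, hvj, hvj', fun hpos => ?_⟩
  have hj : ‖j‖ = 1 := by
    have : ‖j‖ ^ 2 = 1 := by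
      rw [← real_inner_self_eq_norm_sq]
      show ⟪cross3 e a, cross3 e a⟫ = _
      rw [cross3_inner, hee, haa, hea, hae]; ring
    nlinarith [norm_nonneg j]
  have hvn : ‖v‖ = Real.sqrt (2 * h + 1) := by
    rw [← hv2, Real.sqrt_sq (norm_nonneg v)]
  rw [cos_angle, hvj', hvn, hj, mul_one]
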